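/- Let F be a finite field with |F| = q where q is odd, let α be an element of F of multiplicative order (q−1)/2, and let b be a nonsquare element of F. Then the ((q−1)/2) × ((q−1)/2) matrix C = [c_{ij}] with entries c_{ij} = 1/(1 − b·α^{j−i}) for 0 ≤ i, j ≤ (q−3)/2 is superregular. -/

import Mathlib

open Matrix Finset

/-- A matrix over a field is superregular if every minor is nonzero. -/
def Superregular {F : Type*} [Field F] {r ℓ : ℕ} (A : Matrix (Fin r) (Fin ℓ) F) : Prop :=
  ∀ (s : ℕ) (f : Fin s → Fin r) (g : Fin s → Fin ℓ),
    StrictMono f → StrictMono g → (A.submatrix f g).det ≠ 0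

/-- The Cauchy circulant matrix `C` with entries `c_{ij} = 1/(1 - b α^{j-i})`, where `α`
has multiplicative order `(q-1)/2` and `b` is a nonsquare, is superregular. -/
theorem cauchy_circulant_superregular {F : Type*} [Field F] [Fintype F]
    {q : ℕ} (hq : Fintype.card F = q) (hodd : Odd q)
    (α : F) (hα : orderOf α = (q - 1) / 2)
    (b : F) (hb : ¬ IsSquare b)
    (C : Matrix (Fin ((q - 1) / 2)) (Fin ((q - 1) / 2)) F)
    (hC : ∀ i j, C i j = (1 - b * α ^ ((j : ℤ) - (i : ℤ)))⁻¹) :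
    Superregular C := by
  classical
  -- basic numerics
  have hq2 : 2 ≤ q := hq ▸ Fintype.one_lt_card
  have hqodd : q % 2 = 1 := Nat.odd_iff.mp hodd
  have hn1 : 1 ≤ (q - 1) / 2 := by omega
  have hqdiv : q / 2 = (q - 1) / 2 := by omega
  -- α ≠ 0
  have hαn : α ^ ((q - 1) / 2) = 1 := by rw [← hα]; exact pow_orderOf_eq_one α
  have hα0 : α ≠ 0 := by
    rintro rfl
    rw [zero_pow (by omega)] at hαn
    exact one_ne_zero hαn.symm
  have hb0 : b ≠ 0 := by rintro rfl; exact hb ⟨0, (mul_zero 0).symm⟩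
  -- characteristic is not 2
  have hchar : ringChar F ≠ 2 := by
    intro h
    have := FiniteField.even_card_of_char_two (F := F) h
    rw [hq] at this; omega
  -- every integer power of α is a square
  have hsq : ∀ z : ℤ, IsSquare (α ^ z) := by
    intro z
    rw [FiniteField.isSquare_iff hchar (zpow_ne_zero _ hα0), hq, hqdiv]
    rw [← zpow_natCast (α ^ z), ← _root_.zpow_mul, mul_comm, _root_.zpow_mul, zpow_natCast,
      hαn, _root_.one_zpow]
  -- injectivity of i ↦ α ^ i on Fin ((q-1)/2)
  have hαinj : ∀ i j : Fin ((q - 1) / 2),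
      α ^ ((i : ℕ) : ℤ) = α ^ ((j : ℕ) : ℤ) → i = j := by
    intro i j hij
    set u : Fˣ := Units.mk0 α hα0 with hu
    have hou : orderOf u = (q - 1) / 2 := by rw [← orderOf_units]; exact hα
    have : u ^ (i : ℕ) = u ^ (j : ℕ) := by
      ext
      simpa [u, zpow_natCast] using hij
    rw [pow_eq_pow_iff_modEq, hou, Nat.ModEq,
      Nat.mod_eq_of_lt i.isLt, Nat.mod_eq_of_lt j.isLt] at this
    exact Fin.ext this
  -- main argument
  intro s f g hf hg hdet
  rw [← Matrix.exists_mulVec_eq_zero_iff] at hdet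
  obtain ⟨v, hv, hvec⟩ := hdet
  set x : Fin s → F := fun i => α ^ ((f i : ℕ) : ℤ) with hx
  set y : Fin s → F := fun j => b * α ^ ((g j : ℕ) : ℤ) with hy
  have hx0 : ∀ i, x i ≠ 0 := fun i => zpow_ne_zero _ hα0
  have hxy : ∀ i j, x i - y j ≠ 0 := by
    intro i j h
    apply hb
    have hxeq : x i = y j := by linear_combination h
    have hbe : b = α ^ ((f i : ℕ) : ℤ) / α ^ ((g j : ℕ) : ℤ) :=
      (eq_div_iff (zpow_ne_zero _ hα0)).mpr hxeq.symm
    rw [show b = α ^ (((f i : ℕ) : ℤ) - ((g j : ℕ) : ℤ)) by rw [zpow_sub₀ hα0, ← hbe]]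
    exact hsq _
  have hxinj : Function.Injective x := by
    intro i j hij
    exact hf.injective (hαinj _ _ hij)
  have hyinj : Function.Injective y := by
    intro i j hij
    apply hg.injective
    apply hαinj
    exact mul_left_cancel₀ hb0 hij
  -- entries of the submatrix
  have hentry : ∀ i j, (C.submatrix f g) i j = x i * (x i - y j)⁻¹ := by
    intro i j
    rw [Matrix.submatrix_apply, hC]
    have h1 : 1 - b * α ^ (((g j : ℕ) : ℤ) - ((f i : ℕ) : ℤ)) = (x i - y j) * (x i)⁻¹ := by
      rw [zpow_sub₀ hα0]
      field_simp [hx, hy, zpow_ne_zero _ hα0]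
      simp only [hx, hy]
      ring
    rw [h1, mul_inv, inv_inv, mul_comm]
  -- the key relation
  have key : ∀ i, ∑ j, v j * (x i - y j)⁻¹ = 0 := by
    intro i
    have h0 := congrFun hvec i
    simp only [Matrix.mulVec, dotProduct, Pi.zero_apply] at h0
    have : x i * ∑ j, v j * (x i - y j)⁻¹ = 0 := by
      rw [Finset.mul_sum, ← h0]
      exact Finset.sum_congr rfl fun j _ => by simp only [hentry]; ring
    exact (mul_eq_zero.mp this).resolve_left (hx0 i)
  -- the polynomial
  set P : Polynomial F :=
    ∑ j, Polynomial.C (v j) * ∏ k ∈ Finset.univ.erase j, (Polynomial.X - Polynomial.C (y k))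
    with hP
  have hPdeg : P.natDegree < s := by
    rcases Nat.eq_zero_or_pos s with rfl | hs
    · exact absurd (funext fun j => Fin.elim0 j) hv
    refine lt_of_le_of_lt (Polynomial.natDegree_sum_le_of_forall_le _ _ fun j _ => ?_)
      (show s - 1 < s by omega)
    refine le_trans (Polynomial.natDegree_C_mul_le _ _) ?_
    refine le_trans (Polynomial.natDegree_prod_le _ _) ?_
    have hcongr : ∀ k ∈ Finset.univ.erase j,
        (Polynomial.X - Polynomial.C (y k)).natDegree = 1 :=
      fun k _ => Polynomial.natDegree_X_sub_C _
    rw [Finset.sum_congr rfl hcongr, Finset.sum_const, smul_eq_mul, mul_one,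
      Finset.card_erase_of_mem (mem_univ j), Finset.card_univ, Fintype.card_fin]
  have hPeval : ∀ i, P.eval (x i) = 0 := by
    intro i
    have : P.eval (x i) = (∏ k, (x i - y k)) * ∑ j, v j * (x i - y j)⁻¹ := by
      simp only [hP, Polynomial.eval_finset_sum, Polynomial.eval_mul, Polynomial.eval_C,
        Polynomial.eval_prod, Polynomial.eval_sub, Polynomial.eval_X, Finset.mul_sum]
      refine Finset.sum_congr rfl fun j _ => ?_
      rw [← Finset.mul_prod_erase Finset.univ _ (Finset.mem_univ j)]
      field_simp [hxy i j]
    rw [this, key i, mul_zero]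
  have hP0 : P = 0 := by
    refine Polynomial.eq_zero_of_natDegree_lt_card_of_eval_eq_zero P hxinj hPeval ?_
    rwa [Fintype.card_fin]
  -- conclude v = 0
  apply hv
  funext j
  have hj : P.eval (y j) = v j * ∏ k ∈ Finset.univ.erase j, (y j - y k) := by
    simp only [hP, Polynomial.eval_finset_sum, Polynomial.eval_mul, Polynomial.eval_C,
      Polynomial.eval_prod, Polynomial.eval_sub, Polynomial.eval_X]
    refine Finset.sum_eq_single j (fun j' _ hj' => ?_) (fun h => absurd (mem_univ j) h)
    rw [Finset.prod_eq_zero (Finset.mem_erase.mpr ⟨Ne.symm hj', mem_univ j⟩)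
      (sub_self (y j)), mul_zero]
  rw [hP0, Polynomial.eval_zero] at hj
  have hprod : ∏ k ∈ Finset.univ.erase j, (y j - y k) ≠ 0 := by
    refine Finset.prod_ne_zero_iff.mpr fun k hk => sub_ne_zero_of_ne fun h => ?_
    exact (Finset.mem_erase.mp hk).1 (hyinj h.symm)
  have := (mul_eq_zero.mp hj.symm).resolve_right hprod
  simp [this]
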